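/- Let e₁, e₂, e₃, e₄, r be vectors in ℂⁿ and define the RotatE score s(h, r, t) = ‖h ∘ r − t‖, where ∘ denotes the entrywise (Hadamard) product of complex vectors. If s(e₁, r, e₂) = 0, s(e₃, r, e₂) = 0, and s(e₃, r, e₄) = 0, then s(e₁, r, e₄) = 0. -/

import Mathlib

noncomputable def rotatEScore {n : ℕ} (h r t : EuclideanSpace ℂ (Fin n)) : ℝ :=
  let hr : EuclideanSpace ℂ (Fin n) := WithLp.toLp 2 (fun i => h i * r i)
  ‖hr - t‖

theorem z_paradox_rotatE {n : ℕ}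
    (e₁ e₂ e₃ e₄ r : EuclideanSpace ℂ (Fin n))
    (h12 : rotatEScore e₁ r e₂ = 0) (h32 : rotatEScore e₃ r e₂ = 0)
    (h34 : rotatEScore e₃ r e₄ = 0) :
    rotatEScore e₁ r e₄ = 0 := by
  simp only [rotatEScore, norm_eq_zero, sub_eq_zero] at *
  rw [h12, ← h32, h34]
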